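/- (Proposition 4) Let K ≥ 2 and let X_1, …, X_K be finite-valued random variables on a common probability space such that min_{i≠j} I(X_i; X_j) = max_{i≠j} I(X_i; X_j) = μ. Suppose there exists a finite-valued random variable W* jointly distributed with (X_1,…,X_K) such that X_1,…,X_K are conditionally independent given W* and I(X_1,…,X_K; W*) = μ (i.e. the infimum defining B(X_1,…,X_K) is attained at the value max_{i≠j} I(X_i;X_j)). Then C(X_1,…,X_K) = min_{i≠j} I(X_i; X_j) = μ. -/

import Mathlib

open MeasureTheory Real
open scoped ENNReal

/-- Shannon entropy of a finite-valued map `f`, computed from the set-mass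
function `P` (e.g. `P = fun s => μ s` for a probability measure `μ`). -/
noncomputable def entOf {Ω : Type*} {β : Type*} [Fintype β]
    (P : Set Ω → ℝ≥0∞) (f : Ω → β) : ℝ :=
  ∑ b : β, Real.negMulLog (P (f ⁻¹' {b})).toReal

/-- Conditional entropy `H(f | g)`. -/
noncomputable def condEntOf {Ω β γ : Type*} [Fintype β] [Fintype γ]
    (P : Set Ω → ℝ≥0∞) (f : Ω → β) (g : Ω → γ) : ℝ :=
  entOf P (fun ω => (f ω, g ω)) - entOf P g

/-- Mutual information `I(f ; g)`. -/
noncomputable def miOf {Ω β γ : Type*} [Fintype β] [Fintype γ]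
    (P : Set Ω → ℝ≥0∞) (f : Ω → β) (g : Ω → γ) : ℝ :=
  entOf P f + entOf P g - entOf P (fun ω => (f ω, g ω))

/-- Conditional mutual information `I(f ; g | z)`. -/
noncomputable def cmiOf {Ω β γ δ : Type*} [Fintype β] [Fintype γ] [Fintype δ]
    (P : Set Ω → ℝ≥0∞) (f : Ω → β) (g : Ω → γ) (z : Ω → δ) : ℝ :=
  condEntOf P f z + condEntOf P g z - condEntOf P (fun ω => (f ω, g ω)) z

/-- The tuple `X̄ = (X_1, …, X_K)` of the whole family. -/
def tupF {Ω : Type*} {ι : Type*} {α : ι → Type*} (X : ∀ i, Ω → α i) : Ω → ∀ i, α i :=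
  fun ω i => X i ω

/-- The tuple `X̄ ∖ X_k` of the family with index `k` omitted. -/
def tupRest {Ω : Type*} {ι : Type*} {α : ι → Type*} (X : ∀ i, Ω → α i) (k : ι) :
    Ω → ∀ j : {j : ι // j ≠ k}, α j.1 :=
  fun ω j => X j.1 ω

/-- The family `X_1, …, X_K` is conditionally independent given `W`:
`p(x_1, …, x_K | w) = ∏ k p(x_k | w)`, stated multiplicatively. -/
def condIndepFam {Ω : Type*} {ι : Type*} [Fintype ι] {α : ι → Type*}
    {γ : Type*} (P : Set Ω → ℝ≥0∞) (X : ∀ i, Ω → α i) (W : Ω → γ) : Prop :=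
  ∀ (w : γ) (x : ∀ i, α i),
    P {ω | W ω = w ∧ ∀ i, X i ω = x i} * P {ω | W ω = w} ^ (Fintype.card ι - 1)
      = ∏ i, P {ω | W ω = w ∧ X i ω = x i}

/-- The set-mass function associated with a point-mass function `q`. -/
noncomputable def massOf {T : Type*} (q : T → ℝ≥0∞) : Set T → ℝ≥0∞ :=
  fun s => ∑' t : s, q t

/-- The (Gács–Körner type) common information `C(X_1, …, X_K)`: the supremum of
`I(X_1, …, X_K ; W)` over all finite-valued `W` jointly distributed with
`(X_1, …, X_K)` (formalized as a joint pmf `q` on `(∀ i, α i) × γ` whose first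
marginal is the law of `X̄`), subject to the Markov chains
`W − X_k − X̄ ∖ X_k` for every `k`. -/
noncomputable def CInfo {Ω : Type*} {ι : Type} [Fintype ι] [DecidableEq ι]
    {α : ι → Type} [∀ i, Fintype (α i)]
    (P : Set Ω → ℝ≥0∞) (X : ∀ i, Ω → α i) : ℝ :=
  sSup { r : ℝ | ∃ (γ : Type) (_ : Fintype γ) (q : (∀ i, α i) × γ → ℝ≥0∞),
    (∑ z : (∀ i, α i) × γ, q z) = 1 ∧
    (∀ x : ∀ i, α i, massOf q (Prod.fst ⁻¹' {x}) = P (tupF X ⁻¹' {x})) ∧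
    (∀ k : ι, cmiOf (massOf q)
        (tupRest (fun i (p : (∀ i, α i) × γ) => p.1 i) k)
        Prod.snd (fun p => p.1 k) = 0) ∧
    r = miOf (massOf q) Prod.fst Prod.snd }

/-- The (Wyner type) common information `B(X_1, …, X_K)`: the infimum of
`I(X_1, …, X_K ; W)` over all finite-valued `W` jointly distributed with
`(X_1, …, X_K)` such that `X_1, …, X_K` are conditionally independent given `W`. -/
noncomputable def BInfo {Ω : Type*} {ι : Type} [Fintype ι] [DecidableEq ι]
    {α : ι → Type} [∀ i, Fintype (α i)]
    (P : Set Ω → ℝ≥0∞) (X : ∀ i, Ω → α i) : ℝ :=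
  sInf { r : ℝ | ∃ (γ : Type) (_ : Fintype γ) (q : (∀ i, α i) × γ → ℝ≥0∞),
    (∑ z : (∀ i, α i) × γ, q z) = 1 ∧
    (∀ x : ∀ i, α i, massOf q (Prod.fst ⁻¹' {x}) = P (tupF X ⁻¹' {x})) ∧
    condIndepFam (massOf q) (fun i (p : (∀ i, α i) × γ) => p.1 i) Prod.snd ∧
    r = miOf (massOf q) Prod.fst Prod.snd }


-- ===== auxiliary development =====
open Finset Real
open scoped ENNReal Classical
set_option linter.unusedSectionVars false
set_option maxHeartbeats 1000000

section RealCore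
variable {T : Type*} [Fintype T]

noncomputable def fm (w : T → ℝ) (p : T → Prop) : ℝ :=
  ∑ t ∈ Finset.univ.filter p, w t

noncomputable def entW (w : T → ℝ) {β : Type*} [Fintype β] (f : T → β) : ℝ :=
  ∑ b : β, negMulLog (fm w (fun t => f t = b))

noncomputable def miW (w : T → ℝ) {β γ : Type*} [Fintype β] [Fintype γ]
    (f : T → β) (g : T → γ) : ℝ :=
  entW w f + entW w g - entW w (fun t => (f t, g t))

noncomputable def cmiW (w : T → ℝ) {β γ δ : Type*} [Fintype β] [Fintype γ] [Fintype δ]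
    (f : T → β) (g : T → γ) (z : T → δ) : ℝ :=
  entW w (fun t => (f t, z t)) + entW w (fun t => (g t, z t))
    - entW w (fun t => ((f t, g t), z t)) - entW w z

variable {w : T → ℝ}

lemma fm_congr {p p' : T → Prop} (h : ∀ t, p t ↔ p' t) : fm w p = fm w p' := by
  unfold fm
  congr 1
  apply Finset.filter_congr
  intro t _; simp [h t]

lemma fm_nonneg (hw : ∀ t, 0 ≤ w t) (p : T → Prop) : 0 ≤ fm w p :=
  Finset.sum_nonneg fun t _ => hw t

lemma fm_split {β : Type*} [Fintype β] (p : T → Prop) (f : T → β) :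
    fm w p = ∑ b : β, fm w (fun t => p t ∧ f t = b) := by
  unfold fm
  rw [← Finset.sum_fiberwise (Finset.univ.filter p) f w]
  refine Finset.sum_congr rfl fun b _ => ?_
  rw [Finset.filter_filter]
  apply Finset.sum_congr _ (fun _ _ => rfl)
  congr!

lemma entW_pair {β γ : Type*} [Fintype β] [Fintype γ] (f : T → β) (g : T → γ) :
    entW w (fun t => (f t, g t)) =
      ∑ b : β, ∑ c : γ, negMulLog (fm w (fun t => f t = b ∧ g t = c)) := by
  unfold entW
  rw [Fintype.sum_prod_type]
  refine Finset.sum_congr rfl fun b _ => Finset.sum_congr rfl fun c _ => ?_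
  congr 1
  exact fm_congr (fun t => by simp [Prod.ext_iff])

lemma entW_relabel {β γ : Type*} [Fintype β] [Fintype γ] {f : T → β} {g : T → γ}
    (h : ∀ t t', f t = f t' ↔ g t = g t') : entW w f = entW w g := by
  unfold entW
  have hf : ∀ b : β, b ∉ Finset.univ.image f → negMulLog (fm w (fun t => f t = b)) = 0 := by
    intro b hb
    have : Finset.univ.filter (fun t => f t = b) = ∅ := by
      apply Finset.filter_false_of_mem
      intro t _ hft
      exact hb (Finset.mem_image.mpr ⟨t, Finset.mem_univ t, hft⟩)
    simp [fm, this, Real.negMulLog_zero]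
  have hg : ∀ c : γ, c ∉ Finset.univ.image g → negMulLog (fm w (fun t => g t = c)) = 0 := by
    intro c hc
    have : Finset.univ.filter (fun t => g t = c) = ∅ := by
      apply Finset.filter_false_of_mem
      intro t _ hgt
      exact hc (Finset.mem_image.mpr ⟨t, Finset.mem_univ t, hgt⟩)
    simp [fm, this, Real.negMulLog_zero]
  rw [← Finset.sum_subset (Finset.subset_univ (Finset.univ.image f)) (fun b _ hb => hf b hb),
      ← Finset.sum_subset (Finset.subset_univ (Finset.univ.image g)) (fun c _ hc => hg c hc)]
  refine Finset.sum_bij' (i := fun b (hb : b ∈ Finset.univ.image f) =>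
      g ((Finset.mem_image.mp hb).choose))
    (j := fun c (hc : c ∈ Finset.univ.image g) => f ((Finset.mem_image.mp hc).choose))
    ?_ ?_ ?_ ?_ ?_
  · intro b hb
    exact Finset.mem_image.mpr ⟨(Finset.mem_image.mp hb).choose, Finset.mem_univ _, rfl⟩
  · intro c hc
    exact Finset.mem_image.mpr ⟨(Finset.mem_image.mp hc).choose, Finset.mem_univ _, rfl⟩
  · intro b hb
    have hmem : g ((Finset.mem_image.mp hb).choose) ∈ Finset.univ.image g :=
      Finset.mem_image.mpr ⟨_, Finset.mem_univ _, rfl⟩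
    show f ((Finset.mem_image.mp hmem).choose) = b
    exact ((h _ _).mpr (Finset.mem_image.mp hmem).choose_spec.2).trans
      (Finset.mem_image.mp hb).choose_spec.2
  · intro c hc
    have hmem : f ((Finset.mem_image.mp hc).choose) ∈ Finset.univ.image f :=
      Finset.mem_image.mpr ⟨_, Finset.mem_univ _, rfl⟩
    show g ((Finset.mem_image.mp hmem).choose) = c
    exact ((h _ _).mp (Finset.mem_image.mp hmem).choose_spec.2).trans
      (Finset.mem_image.mp hc).choose_spec.2
  · intro b hb
    have hfb : f ((Finset.mem_image.mp hb).choose) = b :=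
      (Finset.mem_image.mp hb).choose_spec.2
    congr 1
    apply fm_congr
    intro t
    exact ⟨fun ht => (h t _).mp (ht.trans hfb.symm), fun hgt => ((h t _).mpr hgt).trans hfb⟩

end RealCore

section Key
variable {β γ δ : Type*} [Fintype β] [Fintype γ] [Fintype δ]
variable (A : β → γ → δ → ℝ)

-- abbreviations
local notation "U" => fun b d => ∑ c : γ, A b c d
local notation "V" => fun c d => ∑ b : β, A b c d
local notation "S" => fun d => ∑ b : β, ∑ c : γ, A b c d

lemma key1 :
    (∑ b, ∑ d, negMulLog (U b d)) + (∑ c, ∑ d, negMulLog (V c d))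
      - (∑ b, ∑ c, ∑ d, negMulLog (A b c d)) - (∑ d, negMulLog (S d))
    = ∑ b, ∑ c, ∑ d, A b c d *
        (log (A b c d) + log (S d) - log (U b d) - log (V c d)) := by
  have hU : ∀ b d, negMulLog (U b d) = ∑ c, -(A b c d * log (U b d)) := by
    intro b d
    rw [negMulLog, neg_mul, Finset.sum_mul, ← Finset.sum_neg_distrib]
  have hV : ∀ c d, negMulLog (V c d) = ∑ b, -(A b c d * log (V c d)) := by
    intro c d
    rw [negMulLog, neg_mul, Finset.sum_mul, ← Finset.sum_neg_distrib]
  have hS : ∀ d, negMulLog (S d) = ∑ b, ∑ c, -(A b c d * log (S d)) := by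
    intro d
    rw [negMulLog, neg_mul, Finset.sum_mul, ← Finset.sum_neg_distrib]
    congr 1 with b
    rw [Finset.sum_mul, ← Finset.sum_neg_distrib]
  have e1 : (∑ b, ∑ d, negMulLog (U b d))
      = ∑ b, ∑ c, ∑ d, -(A b c d * log (U b d)) := by
    refine Finset.sum_congr rfl fun b _ => ?_
    rw [Finset.sum_comm]
    exact Finset.sum_congr rfl fun d _ => hU b d
  have e2 : (∑ c, ∑ d, negMulLog (V c d))
      = ∑ b, ∑ c, ∑ d, -(A b c d * log (V c d)) := by
    calc (∑ c, ∑ d, negMulLog (V c d))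
        = ∑ c, ∑ d, ∑ b, -(A b c d * log (V c d)) :=
          Finset.sum_congr rfl fun c _ => Finset.sum_congr rfl fun d _ => hV c d
      _ = ∑ c, ∑ b, ∑ d, -(A b c d * log (V c d)) :=
          Finset.sum_congr rfl fun c _ => Finset.sum_comm
      _ = ∑ b, ∑ c, ∑ d, -(A b c d * log (V c d)) := Finset.sum_comm
  have e3 : (∑ d, negMulLog (S d))
      = ∑ b, ∑ c, ∑ d, -(A b c d * log (S d)) := by
    calc (∑ d, negMulLog (S d))
        = ∑ d, ∑ b, ∑ c, -(A b c d * log (S d)) :=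
          Finset.sum_congr rfl fun d _ => hS d
      _ = ∑ b, ∑ d, ∑ c, -(A b c d * log (S d)) := Finset.sum_comm
      _ = ∑ b, ∑ c, ∑ d, -(A b c d * log (S d)) :=
          Finset.sum_congr rfl fun b _ => Finset.sum_comm
  rw [e1, e2, e3]
  have e4 : (∑ b, ∑ c, ∑ d, negMulLog (A b c d))
      = ∑ b, ∑ c, ∑ d, -(A b c d * log (A b c d)) := by
    refine Finset.sum_congr rfl fun b _ => Finset.sum_congr rfl fun c _ =>
      Finset.sum_congr rfl fun d _ => ?_
    rw [negMulLog, neg_mul]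
  rw [e4]
  simp only [← Finset.sum_add_distrib, ← Finset.sum_sub_distrib]
  refine Finset.sum_congr rfl fun b _ => Finset.sum_congr rfl fun c _ =>
    Finset.sum_congr rfl fun d _ => by ring

lemma key2 (hA : ∀ b c d, 0 ≤ A b c d) :
    0 ≤ ∑ b, ∑ c, ∑ d, A b c d *
        (log (A b c d) + log (S d) - log (U b d) - log (V c d)) := by
  have hU0 : ∀ b d, 0 ≤ U b d := fun b d => Finset.sum_nonneg fun c _ => hA b c d
  have hV0 : ∀ c d, 0 ≤ V c d := fun c d => Finset.sum_nonneg fun b _ => hA b c d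
  have hS0 : ∀ d, 0 ≤ S d := fun d => Finset.sum_nonneg fun b _ => hU0 b d
  have step : ∀ b c d, A b c d - U b d * V c d / S d ≤ A b c d *
      (log (A b c d) + log (S d) - log (U b d) - log (V c d)) := by
    intro b c d
    rcases eq_or_lt_of_le (hA b c d) with h0 | h0
    · rw [← h0]
      simp only [zero_mul, zero_sub, neg_nonpos, sub_zero]
      exact div_nonneg (mul_nonneg (hU0 b d) (hV0 c d)) (hS0 d)
    · have hAU : A b c d ≤ U b d :=
        Finset.single_le_sum (fun c _ => hA b c d) (Finset.mem_univ c)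
      have hAV : A b c d ≤ V c d :=
        Finset.single_le_sum (fun b _ => hA b c d) (Finset.mem_univ b)
      have hUS : U b d ≤ S d :=
        Finset.single_le_sum (fun b _ => hU0 b d) (Finset.mem_univ b)
      have hUpos : 0 < U b d := lt_of_lt_of_le h0 hAU
      have hVpos : 0 < V c d := lt_of_lt_of_le h0 hAV
      have hSpos : 0 < S d := lt_of_lt_of_le h0 (hAU.trans hUS)
      have hlog : log (A b c d) + log (S d) - log (U b d) - log (V c d)
          = -log (U b d * V c d / (A b c d * S d)) := by
        rw [Real.log_div (by positivity) (by positivity),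
          Real.log_mul (ne_of_gt hUpos) (ne_of_gt hVpos),
          Real.log_mul (ne_of_gt h0) (ne_of_gt hSpos)]
        ring
      have hle : log (U b d * V c d / (A b c d * S d))
          ≤ U b d * V c d / (A b c d * S d) - 1 :=
        Real.log_le_sub_one_of_pos (by positivity)
      have h2 := mul_le_mul_of_nonneg_left hle (hA b c d)
      have h3 : A b c d * (U b d * V c d / (A b c d * S d)) = U b d * V c d / S d := by
        field_simp
      rw [hlog]
      nlinarith [h2, h3]
  calc (0:ℝ) = ∑ d, ∑ b, ∑ c, (A b c d - U b d * V c d / S d) := by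
        symm
        refine Finset.sum_eq_zero fun d _ => ?_
        have expand : ∀ b, ∑ c, (A b c d - U b d * V c d / S d)
            = U b d - U b d * (S d) / S d := by
          intro b
          rw [Finset.sum_sub_distrib]
          congr 1
          rw [← Finset.sum_div, ← Finset.mul_sum]
          congr 2
          exact Finset.sum_comm
        rw [Finset.sum_congr rfl fun b _ => expand b, Finset.sum_sub_distrib,
          ← Finset.sum_div, ← Finset.sum_mul]
        beta_reduce
        rcases eq_or_ne (∑ b, ∑ c, A b c d) 0 with hS | hS
        · rw [hS]; simp
        · rw [sub_eq_zero]
          field_simp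
      _ = ∑ b, ∑ d, ∑ c, (A b c d - U b d * V c d / S d) := Finset.sum_comm
      _ = ∑ b, ∑ c, ∑ d, (A b c d - U b d * V c d / S d) :=
          Finset.sum_congr rfl fun b _ => Finset.sum_comm
      _ ≤ _ := by
        refine Finset.sum_le_sum fun b _ => Finset.sum_le_sum fun c _ =>
          Finset.sum_le_sum fun d _ => step b c d

lemma key3 (hA : ∀ b c d, 0 ≤ A b c d)
    (hfac : ∀ b c d, U b d * V c d = A b c d * S d) :
    (∑ b, ∑ c, ∑ d, A b c d *
        (log (A b c d) + log (S d) - log (U b d) - log (V c d))) = 0 := by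
  refine Finset.sum_eq_zero fun b _ => Finset.sum_eq_zero fun c _ =>
    Finset.sum_eq_zero fun d _ => ?_
  rcases eq_or_lt_of_le (hA b c d) with h0 | h0
  · rw [← h0, zero_mul]
  · have hAU : A b c d ≤ U b d :=
      Finset.single_le_sum (fun c _ => hA b c d) (Finset.mem_univ c)
    have hAV : A b c d ≤ V c d :=
      Finset.single_le_sum (fun b _ => hA b c d) (Finset.mem_univ b)
    have hUS : U b d ≤ S d :=
      Finset.single_le_sum (fun b _ => Finset.sum_nonneg fun c _ => hA b c d)
        (Finset.mem_univ b)
    have hUpos : 0 < U b d := lt_of_lt_of_le h0 hAU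
    have hVpos : 0 < V c d := lt_of_lt_of_le h0 hAV
    have hSpos : 0 < S d := lt_of_lt_of_le h0 (hAU.trans hUS)
    have : log (U b d * V c d) = log (A b c d * S d) := by rw [hfac]
    rw [Real.log_mul (ne_of_gt hUpos) (ne_of_gt hVpos),
      Real.log_mul (ne_of_gt h0) (ne_of_gt hSpos)] at this
    have hz : log (A b c d) + log (S d) - log (U b d) - log (V c d) = 0 := by
      linarith
    rw [hz, mul_zero]
end Key


section CMI
variable {T : Type*} [Fintype T] {w : T → ℝ}
variable {β γ δ : Type*} [Fintype β] [Fintype γ] [Fintype δ]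
variable {f : T → β} {g : T → γ} {z : T → δ}

lemma fm_split1 (f : T → β) (g : T → γ) (z : T → δ) (b : β) (d : δ) :
    fm w (fun t => f t = b ∧ z t = d)
      = ∑ c : γ, fm w (fun t => f t = b ∧ g t = c ∧ z t = d) := by
  rw [fm_split (fun t => f t = b ∧ z t = d) g]
  exact Finset.sum_congr rfl fun c _ => fm_congr fun t => by tauto

lemma fm_split2 (f : T → β) (g : T → γ) (z : T → δ) (c : γ) (d : δ) :
    fm w (fun t => g t = c ∧ z t = d)
      = ∑ b : β, fm w (fun t => f t = b ∧ g t = c ∧ z t = d) := by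
  rw [fm_split (fun t => g t = c ∧ z t = d) f]
  exact Finset.sum_congr rfl fun b _ => fm_congr fun t => by tauto

lemma fm_split3 (f : T → β) (g : T → γ) (z : T → δ) (d : δ) :
    fm w (fun t => z t = d)
      = ∑ b : β, ∑ c : γ, fm w (fun t => f t = b ∧ g t = c ∧ z t = d) := by
  rw [fm_split (fun t => z t = d) f]
  refine Finset.sum_congr rfl fun b _ => ?_
  rw [fm_split (fun t => z t = d ∧ f t = b) g]
  exact Finset.sum_congr rfl fun c _ => fm_congr fun t => by tauto

lemma cmiW_as_key (f : T → β) (g : T → γ) (z : T → δ) :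
    cmiW w f g z = ∑ b, ∑ c, ∑ d,
      (fun b c d => fm w (fun t => f t = b ∧ g t = c ∧ z t = d)) b c d *
        (log ((fun b c d => fm w (fun t => f t = b ∧ g t = c ∧ z t = d)) b c d)
          + log (∑ b', ∑ c', (fun b c d => fm w (fun t => f t = b ∧ g t = c ∧ z t = d)) b' c' d)
          - log (∑ c', (fun b c d => fm w (fun t => f t = b ∧ g t = c ∧ z t = d)) b c' d)
          - log (∑ b', (fun b c d => fm w (fun t => f t = b ∧ g t = c ∧ z t = d)) b' c d)) := by
  have h1 : entW w (fun t => (f t, z t))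
      = ∑ b, ∑ d, negMulLog (∑ c, fm w (fun t => f t = b ∧ g t = c ∧ z t = d)) := by
    rw [entW_pair f z]
    exact Finset.sum_congr rfl fun b _ => Finset.sum_congr rfl fun d _ => by
      rw [fm_split1 f g z b d]
  have h2 : entW w (fun t => (g t, z t))
      = ∑ c, ∑ d, negMulLog (∑ b, fm w (fun t => f t = b ∧ g t = c ∧ z t = d)) := by
    rw [entW_pair g z]
    exact Finset.sum_congr rfl fun c _ => Finset.sum_congr rfl fun d _ => by
      rw [fm_split2 f g z c d]
  have h3 : entW w (fun t => ((f t, g t), z t))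
      = ∑ b, ∑ c, ∑ d, negMulLog (fm w (fun t => f t = b ∧ g t = c ∧ z t = d)) := by
    rw [entW_pair (fun t => (f t, g t)) z, Fintype.sum_prod_type]
    refine Finset.sum_congr rfl fun b _ => Finset.sum_congr rfl fun c _ =>
      Finset.sum_congr rfl fun d _ => ?_
    congr 1
    exact fm_congr fun t => by simp [Prod.ext_iff, and_assoc]
  have h4 : entW w z
      = ∑ d, negMulLog (∑ b, ∑ c, fm w (fun t => f t = b ∧ g t = c ∧ z t = d)) := by
    unfold entW
    exact Finset.sum_congr rfl fun d _ => by rw [fm_split3 f g z d]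
  unfold cmiW
  rw [h1, h2, h3, h4]
  exact key1 (fun b c d => fm w (fun t => f t = b ∧ g t = c ∧ z t = d))

lemma cmiW_nonneg (hw : ∀ t, 0 ≤ w t) (f : T → β) (g : T → γ) (z : T → δ) :
    0 ≤ cmiW w f g z := by
  rw [cmiW_as_key f g z]
  exact key2 _ (fun b c d => fm_nonneg hw _)

lemma cmiW_eq_zero (hw : ∀ t, 0 ≤ w t)
    (hfac : ∀ (b : β) (c : γ) (d : δ),
      fm w (fun t => f t = b ∧ z t = d) * fm w (fun t => g t = c ∧ z t = d)
        = fm w (fun t => f t = b ∧ g t = c ∧ z t = d) * fm w (fun t => z t = d)) :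
    cmiW w f g z = 0 := by
  rw [cmiW_as_key f g z]
  refine key3 _ (fun b c d => fm_nonneg hw _) ?_
  intro b c d
  beta_reduce
  rw [← fm_split1 f g z b d, ← fm_split2 f g z c d, ← fm_split3 f g z d]
  exact hfac b c d

end CMI

section Chain
variable {T : Type*} [Fintype T] {w : T → ℝ}
variable {β γ δ ε : Type*} [Fintype β] [Fintype γ] [Fintype δ] [Fintype ε]

lemma entW_swap (f : T → β) (g : T → γ) :
    entW w (fun t => (f t, g t)) = entW w (fun t => (g t, f t)) :=
  entW_relabel fun t t' => by simp only [Prod.ext_iff]; tauto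

lemma miW_chain (f : T → β) (g : T → γ) (z : T → δ) :
    miW w f (fun t => (z t, g t)) = miW w f z + cmiW w f g z := by
  have e1 : entW w (fun t => (z t, g t)) = entW w (fun t => (g t, z t)) :=
    entW_relabel fun t t' => by simp only [Prod.ext_iff]; tauto
  have e2 : entW w (fun t => (f t, (z t, g t)))
      = entW w (fun t => ((f t, g t), z t)) :=
    entW_relabel fun t t' => by simp only [Prod.ext_iff]; tauto
  unfold miW cmiW
  rw [e1, e2]
  ring

lemma cmiW_chain2 {f : T → β} {f' : T → ε} (g : T → γ) (z : T → δ)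
    (h : ∀ t t', f t = f t' → f' t = f' t') :
    cmiW w f g z = cmiW w f' g z + cmiW w f g (fun t => (f' t, z t)) := by
  have e1 : entW w (fun t => (f t, (f' t, z t)))
      = entW w (fun t => (f t, z t)) :=
    entW_relabel fun t t' => by
      simp only [Prod.ext_iff]
      exact ⟨fun ⟨h1, _, h3⟩ => ⟨h1, h3⟩, fun ⟨h1, h3⟩ => ⟨h1, h _ _ h1, h3⟩⟩
  have e2 : entW w (fun t => ((f t, g t), (f' t, z t)))
      = entW w (fun t => ((f t, g t), z t)) :=
    entW_relabel fun t t' => by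
      simp only [Prod.ext_iff]
      exact ⟨fun ⟨⟨h1, h2⟩, _, h3⟩ => ⟨⟨h1, h2⟩, h3⟩,
        fun ⟨⟨h1, h2⟩, h3⟩ => ⟨⟨h1, h2⟩, h _ _ h1, h3⟩⟩
  have e3 : entW w (fun t => (g t, (f' t, z t)))
      = entW w (fun t => ((f' t, g t), z t)) :=
    entW_relabel fun t t' => by simp only [Prod.ext_iff]; tauto
  unfold cmiW
  rw [e1, e2, e3]
  ring

end Chain


section Bridge
variable {T : Type*} [Fintype T]

noncomputable def wE (q : T → ℝ≥0∞) : T → ℝ := fun t => (q t).toReal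

lemma wE_nonneg (q : T → ℝ≥0∞) : ∀ t, 0 ≤ wE q t := fun t => ENNReal.toReal_nonneg

variable {q : T → ℝ≥0∞}

lemma massOf_eq_filter (S : Set T) :
    massOf q S = ∑ t ∈ Finset.univ.filter (· ∈ S), q t := by
  unfold massOf
  rw [tsum_subtype S q, tsum_fintype]
  rw [Finset.sum_filter]
  refine Finset.sum_congr rfl fun t _ => ?_
  simp [Set.indicator_apply]

lemma q_ne_top (hq : ∑ t, q t = 1) (t : T) : q t ≠ ⊤ := by
  intro h
  have : q t ≤ 1 := hq ▸ Finset.single_le_sum (fun _ _ => zero_le) (Finset.mem_univ t)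
  rw [h] at this
  exact (by simp : ¬ (⊤ : ℝ≥0∞) ≤ 1) this

lemma massOf_ne_top (hq : ∑ t, q t = 1) (S : Set T) : massOf q S ≠ ⊤ := by
  have hle : massOf q S ≤ 1 := by
    rw [massOf_eq_filter, ← hq]
    exact Finset.sum_le_sum_of_subset (Finset.filter_subset _ _)
  exact (lt_of_le_of_lt hle ENNReal.one_lt_top).ne

lemma toReal_massOf (hq : ∑ t, q t = 1) (S : Set T) :
    (massOf q S).toReal = fm (wE q) (fun t => t ∈ S) := by
  rw [massOf_eq_filter, ENNReal.toReal_sum (fun t _ => q_ne_top hq t)]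
  rfl

lemma massOf_singleton (t0 : T) : massOf q {t0} = q t0 := by
  rw [massOf_eq_filter]
  erw [show Finset.univ.filter (fun t => t ∈ ({t0} : Set T)) = {t0} from by
    ext t; simp]
  simp

lemma massOf_partition {Y : Type*} [Fintype Y] (p : T → Prop) (h : T → Y) :
    ∑ y : Y, massOf q {t | p t ∧ h t = y} = massOf q {t | p t} := by
  simp only [massOf_eq_filter]
  rw [← Finset.sum_fiberwise (Finset.univ.filter (· ∈ {t | p t})) h q]
  refine Finset.sum_congr rfl fun y _ => ?_
  rw [Finset.filter_filter]
  refine Finset.sum_congr ?_ (fun _ _ => rfl)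
  ext t
  simp

lemma entOf_massOf (hq : ∑ t, q t = 1) {β : Type*} [Fintype β] (f : T → β) :
    entOf (massOf q) f = entW (wE q) f := by
  unfold entOf entW
  refine Finset.sum_congr rfl fun b _ => ?_
  rw [toReal_massOf hq]
  congr 1

lemma miOf_massOf (hq : ∑ t, q t = 1) {β γ : Type*} [Fintype β] [Fintype γ]
    (f : T → β) (g : T → γ) :
    miOf (massOf q) f g = miW (wE q) f g := by
  unfold miOf miW
  rw [entOf_massOf hq, entOf_massOf hq, entOf_massOf hq]

lemma cmiOf_massOf (hq : ∑ t, q t = 1) {β γ δ : Type*} [Fintype β] [Fintype γ]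
    [Fintype δ] (f : T → β) (g : T → γ) (z : T → δ) :
    cmiOf (massOf q) f g z = cmiW (wE q) f g z := by
  unfold cmiOf condEntOf cmiW
  rw [entOf_massOf hq, entOf_massOf hq, entOf_massOf hq, entOf_massOf hq]
  ring

end Bridge


section SumProd
variable {ι : Type} [Fintype ι] [DecidableEq ι] {α : ι → Type} [∀ i, Fintype (α i)]

lemma sumprod (M : ∀ l, α l → ℝ≥0∞) (R : Finset ι) :
    ∀ y : ∀ l, α l,
      ∑ x ∈ Finset.univ.filter (fun x : ∀ l, α l => ∀ l ∉ R, x l = y l),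
        ∏ l ∈ R, M l (x l)
      = ∏ l ∈ R, ∑ a, M l a := by
  induction R using Finset.induction_on with
  | empty =>
    intro y
    have : Finset.univ.filter (fun x : ∀ l, α l => ∀ l ∉ (∅ : Finset ι), x l = y l)
        = {y} := by
      ext x
      simp [funext_iff]
    rw [this]
    simp
  | @insert k R hk IH =>
    intro y
    have hsplit : ∑ x ∈ Finset.univ.filter
          (fun x : ∀ l, α l => ∀ l ∉ insert k R, x l = y l),
          ∏ l ∈ insert k R, M l (x l)
        = ∑ a : α k, ∑ x ∈ Finset.univ.filter
            (fun x : ∀ l, α l => (∀ l ∉ insert k R, x l = y l) ∧ x k = a),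
            ∏ l ∈ insert k R, M l (x l) := by
      rw [← Finset.sum_fiberwise (Finset.univ.filter
        (fun x : ∀ l, α l => ∀ l ∉ insert k R, x l = y l)) (fun x => x k)]
      refine Finset.sum_congr rfl fun a _ => ?_
      rw [Finset.filter_filter]
    rw [hsplit]
    have hstep : ∀ a : α k,
        ∑ x ∈ Finset.univ.filter
            (fun x : ∀ l, α l => (∀ l ∉ insert k R, x l = y l) ∧ x k = a),
            ∏ l ∈ insert k R, M l (x l)
        = M k a * ∏ l ∈ R, ∑ b, M l b := by
      intro a
      have hfe : Finset.univ.filter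
          (fun x : ∀ l, α l => (∀ l ∉ insert k R, x l = y l) ∧ x k = a)
          = Finset.univ.filter
            (fun x : ∀ l, α l => ∀ l ∉ R, x l = Function.update y k a l) := by
        apply Finset.filter_congr
        intro x _
        constructor
        · rintro ⟨h1, h2⟩ l hl
          rcases eq_or_ne l k with rfl | hlk
          · rw [Function.update_self]; exact h2
          · rw [Function.update_of_ne hlk]
            exact h1 l (by simp [hlk, hl])
        · intro h1
          refine ⟨fun l hl => ?_, ?_⟩
          · have hlk : l ≠ k := fun h => hl (h ▸ Finset.mem_insert_self k R)
            have hlR : l ∉ R := fun h => hl (Finset.mem_insert_of_mem h)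
            have := h1 l hlR
            rwa [Function.update_of_ne hlk] at this
          · have := h1 k hk
            rwa [Function.update_self] at this
      have hval : ∀ x ∈ Finset.univ.filter
          (fun x : ∀ l, α l => (∀ l ∉ insert k R, x l = y l) ∧ x k = a),
          ∏ l ∈ insert k R, M l (x l) = M k a * ∏ l ∈ R, M l (x l) := by
        intro x hx
        have hxk : x k = a := (Finset.mem_filter.mp hx).2.2
        rw [Finset.prod_insert hk, hxk]
      rw [Finset.sum_congr rfl hval, hfe, ← Finset.mul_sum, IH (Function.update y k a)]
    rw [Finset.sum_congr rfl fun a _ => hstep a, ← Finset.sum_mul,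
      Finset.prod_insert hk]

end SumProd


section CIlemma
variable {K : ℕ} {α : Fin K → Type} [∀ k, Fintype (α k)] {γ' : Type} [Fintype γ']

lemma massOf_mono {T : Type*} [Fintype T] {q : T → ℝ≥0∞} {S S' : Set T}
    (h : S ⊆ S') : massOf q S ≤ massOf q S' := by
  rw [massOf_eq_filter, massOf_eq_filter]
  apply Finset.sum_le_sum_of_subset
  exact Finset.monotone_filter_right _ (fun t _ ht => h ht)

lemma CI_enn (hK : 2 ≤ K) (q : (∀ i : Fin K, α i) × γ' → ℝ≥0∞)
    (hq : ∑ z, q z = 1)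
    (hci : condIndepFam (massOf q) (fun i (p : (∀ i : Fin K, α i) × γ') => p.1 i)
      Prod.snd)
    {i j : Fin K} (hij : i ≠ j) (b : α i) (c : α j) (d : γ') :
    massOf q {z | z.1 i = b ∧ z.2 = d} * massOf q {z | z.1 j = c ∧ z.2 = d}
      = massOf q {z | (z.1 i = b ∧ z.1 j = c) ∧ z.2 = d}
        * massOf q {z | z.2 = d} := by
  classical
  set n := massOf q {z : (∀ i : Fin K, α i) × γ' | z.2 = d} with hn
  set M : ∀ l : Fin K, α l → ℝ≥0∞ :=
    fun l a => massOf q {z : (∀ i : Fin K, α i) × γ' | z.2 = d ∧ z.1 l = a} with hM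
  -- single point identity
  have hx : ∀ x : ∀ i : Fin K, α i, q (x, d) * n ^ (K - 1) = ∏ l, M l (x l) := by
    intro x
    have h0 := hci d x
    have hset : {ω : (∀ i : Fin K, α i) × γ' | Prod.snd ω = d ∧
        ∀ i, ω.1 i = x i} = {(x, d)} := by
      ext z
      simp only [Set.mem_setOf_eq, Set.mem_singleton_iff, Prod.ext_iff, funext_iff]
      tauto
    rw [hset, massOf_singleton] at h0
    simpa [Fintype.card_fin] using h0
  -- reorder target sets
  have ha : massOf q {z : (∀ i : Fin K, α i) × γ' | z.1 i = b ∧ z.2 = d} = M i b := by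
    rw [hM]; congr 1; ext z; simp [and_comm]
  have hb' : massOf q {z : (∀ i : Fin K, α i) × γ' | z.1 j = c ∧ z.2 = d} = M j c := by
    rw [hM]; congr 1; ext z; simp [and_comm]
  rw [ha, hb']
  -- case: V empty
  rcases isEmpty_or_nonempty (∀ i : Fin K, α i) with hemp | hne
  · have hz : ∀ S : Set ((∀ i : Fin K, α i) × γ'), massOf q S = 0 := by
      intro S
      rw [massOf_eq_filter]
      have : (Finset.univ : Finset ((∀ i : Fin K, α i) × γ')) = ∅ := by
        apply Finset.univ_eq_empty
      rw [this]
      simp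
    simp only [hM, hn]
    rw [hz, hz, hz]
    simp
  -- main case
  set y : ∀ i : Fin K, α i := Function.update (Function.update (Classical.arbitrary (∀ i : Fin K, α i)) i b) j c
    with hy
  have hyi : y i = b := by
    rw [hy, Function.update_of_ne hij, Function.update_self]
  have hyj : y j = c := by rw [hy, Function.update_self]
  set R : Finset (Fin K) := Finset.univ \ {i, j} with hR
  have hnotR : ∀ l : Fin K, l ∉ R ↔ (l = i ∨ l = j) := by
    intro l
    simp only [hR, Finset.mem_sdiff, Finset.mem_univ, true_and, not_not,
      Finset.mem_insert, Finset.mem_singleton, not_and, not_forall]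
  set F := Finset.univ.filter (fun x : ∀ i : Fin K, α i => x i = b ∧ x j = c) with hF
  have hFR : F = Finset.univ.filter (fun x : ∀ i : Fin K, α i => ∀ l ∉ R, x l = y l) := by
    rw [hF]
    apply Finset.filter_congr
    intro x _
    constructor
    · rintro ⟨h1, h2⟩ l hl
      rcases (hnotR l).mp hl with rfl | rfl
      · rw [hyi]; exact h1
      · rw [hyj]; exact h2
    · intro h1
      constructor
      · have := h1 i ((hnotR i).mpr (Or.inl rfl)); rw [hyi] at this; exact this
      · have := h1 j ((hnotR j).mpr (Or.inr rfl)); rw [hyj] at this; exact this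
  -- summing hx over F
  have hsum : (∑ x ∈ F, q (x, d)) * n ^ (K - 1)
      = ∑ x ∈ F, ∏ l, M l (x l) := by
    rw [Finset.sum_mul]
    exact Finset.sum_congr rfl fun x _ => hx x
  -- LHS of hsum is A
  have hmempty : massOf q (∅ : Set ((∀ i : Fin K, α i) × γ')) = 0 := by
    rw [massOf_eq_filter]
    simp
  have hA : massOf q {z : (∀ i : Fin K, α i) × γ' | (z.1 i = b ∧ z.1 j = c) ∧ z.2 = d}
      = ∑ x ∈ F, q (x, d) := by
    rw [← massOf_partition (fun z : (∀ i : Fin K, α i) × γ' =>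
      (z.1 i = b ∧ z.1 j = c) ∧ z.2 = d) (fun z => z.1), hF, Finset.sum_filter]
    refine Finset.sum_congr rfl fun x _ => ?_
    by_cases hxc : x i = b ∧ x j = c
    · rw [if_pos hxc]
      rw [show {t : (∀ i : Fin K, α i) × γ' |
          ((t.1 i = b ∧ t.1 j = c) ∧ t.2 = d) ∧ t.1 = x} = {(x, d)} from by
        ext z
        simp only [Set.mem_setOf_eq, Set.mem_singleton_iff, Prod.ext_iff]
        constructor
        · rintro ⟨⟨_, h2⟩, h3⟩
          exact ⟨h3, h2⟩
        · rintro ⟨h1, h2⟩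
          rw [h1, h2]
          exact ⟨⟨hxc, rfl⟩, rfl⟩]
      exact massOf_singleton _
    · rw [if_neg hxc]
      rw [show {t : (∀ i : Fin K, α i) × γ' |
          ((t.1 i = b ∧ t.1 j = c) ∧ t.2 = d) ∧ t.1 = x} = ∅ from by
        ext z
        simp only [Set.mem_setOf_eq, Set.mem_empty_iff_false, iff_false]
        rintro ⟨⟨⟨h1, h2⟩, _⟩, h4⟩
        exact hxc ⟨h4 ▸ h1, h4 ▸ h2⟩]
      exact hmempty
  -- RHS of hsum
  have hMn : ∀ l : Fin K, ∑ a : α l, M l a = n := by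
    intro l
    rw [hM, hn]
    exact massOf_partition (fun z : (∀ i : Fin K, α i) × γ' => z.2 = d)
      (fun z => z.1 l)
  have hcardR : R.card = K - 2 := by
    rw [hR, Finset.card_sdiff_of_subset (Finset.subset_univ _)]
    rw [Finset.card_univ, Fintype.card_fin]
    congr 1
    rw [Finset.card_insert_of_notMem (by simp [hij]), Finset.card_singleton]
  have hRHS : ∑ x ∈ F, ∏ l, M l (x l) = M i b * M j c * n ^ (K - 2) := by
    have hiR : i ∉ R := by rw [hnotR]; exact Or.inl rfl
    have hjR : j ∉ R := by rw [hnotR]; exact Or.inr rfl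
    have hins : (Finset.univ : Finset (Fin K)) = insert i (insert j R) := by
      ext l
      simp only [Finset.mem_univ, true_iff, Finset.mem_insert]
      by_cases h1 : l = i
      · exact Or.inl h1
      by_cases h2 : l = j
      · exact Or.inr (Or.inl h2)
      · refine Or.inr (Or.inr ?_)
        by_contra hc
        rcases (hnotR l).mp hc with h | h
        · exact h1 h
        · exact h2 h
    have hjiR : j ∉ R ∧ i ∉ insert j R := by
      refine ⟨hjR, ?_⟩
      simp only [Finset.mem_insert]
      rintro (h | h)
      · exact hij h
      · exact hiR h
    have hprod : ∀ x ∈ F, ∏ l, M l (x l)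
        = M i b * (M j c * ∏ l ∈ R, M l (x l)) := by
      intro x hxm
      rw [hF] at hxm
      obtain ⟨-, hx1, hx2⟩ := Finset.mem_filter.mp hxm
      rw [hins, Finset.prod_insert hjiR.2, Finset.prod_insert hjiR.1, hx1, hx2]
    rw [Finset.sum_congr rfl hprod]
    rw [← Finset.mul_sum, ← Finset.mul_sum]
    have hsp : ∑ x ∈ F, ∏ l ∈ R, M l (x l) = ∏ l ∈ R, ∑ a, M l a := by
      rw [← sumprod M R y]
      apply Finset.sum_congr
      · rw [hFR]
        congr!
      · intros; rfl
    rw [hsp, Finset.prod_congr rfl (fun l _ => hMn l), Finset.prod_const, hcardR]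
    ring
  rw [← hA] at hsum
  rw [hRHS] at hsum
  -- now cancel n^(K-2)
  rcases eq_or_ne n 0 with hn0 | hn0
  · have h1 : massOf q {z : (∀ i : Fin K, α i) × γ' |
        (z.1 i = b ∧ z.1 j = c) ∧ z.2 = d} = 0 := by
      refine le_antisymm ?_ zero_le
      rw [← hn0, hn]
      exact massOf_mono fun z hz => hz.2
    have h2 : M i b = 0 := by
      refine le_antisymm ?_ zero_le
      rw [← hn0, hn, hM]
      exact massOf_mono fun z hz => hz.1
    rw [h1, h2]
    simp
  · have hnne : n ≠ ⊤ := by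
      rw [hn]
      exact massOf_ne_top hq _
    have hKsub : K - 1 = (K - 2) + 1 := by omega
    rw [hKsub, pow_succ] at hsum
    have hc0 : n ^ (K - 2) ≠ 0 := pow_ne_zero _ hn0
    have hct : n ^ (K - 2) ≠ ⊤ := ENNReal.pow_ne_top hnne
    have hsum' : (massOf q {z : (∀ i : Fin K, α i) × γ' |
        (z.1 i = b ∧ z.1 j = c) ∧ z.2 = d} * n) * n ^ (K - 2)
        = (M i b * M j c) * n ^ (K - 2) := by
      rw [← hsum]
      ring
    exact ((ENNReal.mul_left_strictMono hc0 hct).injective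
      (by simpa [mul_comm] using hsum')).symm


end CIlemma


section Transfer
variable {Ω : Type*} [MeasurableSpace Ω] (μ : MeasureTheory.Measure Ω)
  [MeasureTheory.IsProbabilityMeasure μ]
  {K : ℕ} {α : Fin K → Type} [∀ k, Fintype (α k)] (X : ∀ k, Ω → α k)
  {γ' : Type} [Fintype γ'] (q : (∀ i, α i) × γ' → ℝ≥0∞)

lemma transfer_mass (hq : ∑ z, q z = 1)
    (hmarg : ∀ x : ∀ i, α i, massOf q (Prod.fst ⁻¹' {x}) = μ (tupF X ⁻¹' {x}))
    (S : Set (∀ i, α i)) : μ (tupF X ⁻¹' S) = massOf q (Prod.fst ⁻¹' S) := by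
  classical
  set F := Finset.univ.filter (fun x : ∀ i, α i => x ∈ S) with hF
  set Fc := Finset.univ.filter (fun x : ∀ i, α i => x ∈ Sᶜ) with hFc
  -- massOf side: decomposition into fibers
  have hdecomp : ∀ S' : Set (∀ i, α i), massOf q (Prod.fst ⁻¹' S')
      = ∑ x ∈ Finset.univ.filter (fun x => x ∈ S'), massOf q (Prod.fst ⁻¹' {x}) := by
    intro S'
    have h1 : massOf q (Prod.fst ⁻¹' S') = massOf q {z | z.1 ∈ S'} := rfl
    rw [h1, ← massOf_partition (fun z : (∀ i, α i) × γ' => z.1 ∈ S') (fun z => z.1)]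
    rw [Finset.sum_filter]
    refine Finset.sum_congr rfl fun x _ => ?_
    by_cases hx : x ∈ S'
    · rw [if_pos hx]
      congr 1
      ext z
      simp only [Set.mem_setOf_eq, Set.mem_preimage, Set.mem_singleton_iff]
      constructor
      · rintro ⟨_, h2⟩; exact h2
      · intro h2; exact ⟨h2 ▸ hx, h2⟩
    · rw [if_neg hx]
      have : {z : (∀ i, α i) × γ' | z.1 ∈ S' ∧ z.1 = x} = ∅ := by
        ext z
        simp only [Set.mem_setOf_eq, Set.mem_empty_iff_false, iff_false]
        rintro ⟨h1', h2⟩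
        exact hx (h2 ▸ h1')
      rw [this, massOf_eq_filter]
      simp
  -- total mass one
  have htot : ∑ x : ∀ i, α i, massOf q (Prod.fst ⁻¹' {x}) = 1 := by
    have h1 : massOf q (Prod.fst ⁻¹' (Set.univ : Set (∀ i, α i))) = 1 := by
      rw [show Prod.fst ⁻¹' (Set.univ : Set (∀ i, α i)) = Set.univ from by simp]
      rw [massOf_eq_filter]
      simpa [Finset.filter_true_of_mem] using hq
    rw [hdecomp Set.univ] at h1
    rw [← h1]
    apply Finset.sum_congr _ (fun _ _ => rfl)
    ext x; simp
  -- upper bound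
  have hup : ∀ (S' : Set (∀ i, α i)) (F' : Finset (∀ i, α i)),
      (∀ x, x ∈ F' ↔ x ∈ S') →
      μ (tupF X ⁻¹' S') ≤ ∑ x ∈ F', μ (tupF X ⁻¹' {x}) := by
    intro S' F' hFS
    have hcover : tupF X ⁻¹' S' = ⋃ x ∈ F', tupF X ⁻¹' {x} := by
      ext ω
      simp only [Set.mem_preimage, Set.mem_iUnion, Set.mem_singleton_iff]
      constructor
      · intro h; exact ⟨tupF X ω, (hFS _).mpr h, rfl⟩
      · rintro ⟨x, hx, rfl⟩; exact (hFS _).mp hx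
    rw [hcover]
    exact MeasureTheory.measure_biUnion_finset_le _ _
  -- lower bound part
  have hsplit : (∑ x ∈ F, μ (tupF X ⁻¹' {x})) + (∑ x ∈ Fc, μ (tupF X ⁻¹' {x})) = 1 := by
    have : ∀ x : ∀ i, α i, μ (tupF X ⁻¹' {x}) = massOf q (Prod.fst ⁻¹' {x}) :=
      fun x => (hmarg x).symm
    simp only [this]
    rw [show Fc = Finset.univ.filter (fun x : ∀ i, α i => ¬ x ∈ S) from by
      ext x; simp [hFc]]
    rw [show F = Finset.univ.filter (fun x : ∀ i, α i => x ∈ S) from by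
      ext x; simp [hF]]
    rw [Finset.sum_filter_add_sum_filter_not]
    exact htot
  have huniv : (1 : ℝ≥0∞) ≤ μ (tupF X ⁻¹' S) + μ (tupF X ⁻¹' Sᶜ) := by
    have hcup : (tupF X ⁻¹' S) ∪ (tupF X ⁻¹' Sᶜ) = Set.univ := by
      ext ω
      simp only [Set.mem_union, Set.mem_preimage, Set.mem_compl_iff, Set.mem_univ,
        iff_true]
      exact em _
    calc (1 : ℝ≥0∞) = μ Set.univ := (MeasureTheory.measure_univ).symm
      _ = μ ((tupF X ⁻¹' S) ∪ (tupF X ⁻¹' Sᶜ)) := by rw [hcup]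
      _ ≤ μ (tupF X ⁻¹' S) + μ (tupF X ⁻¹' Sᶜ) := MeasureTheory.measure_union_le _ _
  -- combine
  have hQle : (∑ x ∈ Fc, μ (tupF X ⁻¹' {x})) ≤ 1 := by
    rw [← hsplit]; exact le_add_self
  have hQne : (∑ x ∈ Fc, μ (tupF X ⁻¹' {x})) ≠ ⊤ :=
    (lt_of_le_of_lt hQle ENNReal.one_lt_top).ne
  have hPeq : (∑ x ∈ F, μ (tupF X ⁻¹' {x}))
      = 1 - (∑ x ∈ Fc, μ (tupF X ⁻¹' {x})) :=
    (ENNReal.sub_eq_of_eq_add hQne hsplit.symm).symm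
  have hle1 : μ (tupF X ⁻¹' S) ≤ ∑ x ∈ F, μ (tupF X ⁻¹' {x}) :=
    hup S F (by intro x; simp [hF])
  have hge1 : (∑ x ∈ F, μ (tupF X ⁻¹' {x})) ≤ μ (tupF X ⁻¹' S) := by
    rw [hPeq]
    rw [tsub_le_iff_right]
    calc (1:ℝ≥0∞) ≤ μ (tupF X ⁻¹' S) + μ (tupF X ⁻¹' Sᶜ) := huniv
      _ ≤ μ (tupF X ⁻¹' S) + ∑ x ∈ Fc, μ (tupF X ⁻¹' {x}) := by
          exact add_le_add le_rfl (hup Sᶜ Fc (by intro x; simp [hFc]))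
  have hmu : μ (tupF X ⁻¹' S) = ∑ x ∈ F, μ (tupF X ⁻¹' {x}) :=
    le_antisymm hle1 hge1
  rw [hmu, hdecomp S]
  refine Finset.sum_congr ?_ fun x _ => (hmarg x).symm
  ext x; simp [hF]

lemma transfer_ent (hq : ∑ z, q z = 1)
    (hmarg : ∀ x : ∀ i, α i, massOf q (Prod.fst ⁻¹' {x}) = μ (tupF X ⁻¹' {x}))
    {β : Type*} [Fintype β] (G : (∀ i, α i) → β) :
    entOf (fun s => μ s) (fun ω => G (tupF X ω)) = entOf (massOf q) (fun z => G z.1) := by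
  unfold entOf
  refine Finset.sum_congr rfl fun b _ => ?_
  exact congrArg Real.negMulLog
    (congrArg ENNReal.toReal (transfer_mass μ X q hq hmarg (G ⁻¹' {b})))

lemma transfer_mi (hq : ∑ z, q z = 1)
    (hmarg : ∀ x : ∀ i, α i, massOf q (Prod.fst ⁻¹' {x}) = μ (tupF X ⁻¹' {x}))
    (i j : Fin K) :
    miOf (fun s => μ s) (X i) (X j)
      = miOf (massOf q) (fun z => z.1 i) (fun z => z.1 j) := by
  unfold miOf
  rw [show (X i) = (fun ω => (tupF X ω) i) from rfl,
    show (X j) = (fun ω => (tupF X ω) j) from rfl]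
  rw [transfer_ent μ X q hq hmarg (fun x => x i),
    transfer_ent μ X q hq hmarg (fun x => x j),
    show (fun ω => ((fun ω' => tupF X ω' i) ω, (fun ω' => tupF X ω' j) ω))
      = (fun ω => (fun x => (x i, x j)) (tupF X ω)) from rfl,
    transfer_ent μ X q hq hmarg (fun x => (x i, x j))]

end Transfer


section Main
variable {K : ℕ} {α : Fin K → Type} [∀ k, Fintype (α k)] {γ' : Type} [Fintype γ']
  (q : (∀ i, α i) × γ' → ℝ≥0∞)

lemma markov_diff (hq : ∑ z, q z = 1) (k : Fin K) :
    cmiOf (massOf q) (tupRest (fun i (p : (∀ i, α i) × γ') => p.1 i) k) Prod.snd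
      (fun p => p.1 k)
    = miOf (massOf q) Prod.fst Prod.snd
      - miOf (massOf q) (fun p => p.1 k) Prod.snd := by
  rw [cmiOf_massOf hq, miOf_massOf hq, miOf_massOf hq]
  have e1 : entW (wE q) (fun z : (∀ i, α i) × γ' =>
      (tupRest (fun i (p : (∀ i, α i) × γ') => p.1 i) k z, (fun p : (∀ i, α i) × γ' => p.1 k) z))
      = entW (wE q) (Prod.fst : (∀ i, α i) × γ' → ∀ i, α i) := by
    apply entW_relabel
    intro z z'
    simp only [Prod.ext_iff, tupRest, funext_iff]
    constructor
    · rintro ⟨h1, h2⟩ l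
      by_cases hl : l = k
      · subst hl; exact h2
      · exact h1 ⟨l, hl⟩
    · intro h
      exact ⟨fun j => h j.1, h k⟩
  have e2 : entW (wE q) (fun z : (∀ i, α i) × γ' =>
      ((tupRest (fun i (p : (∀ i, α i) × γ') => p.1 i) k z, Prod.snd z),
        (fun p : (∀ i, α i) × γ' => p.1 k) z))
      = entW (wE q) (fun z : (∀ i, α i) × γ' => (Prod.fst z, Prod.snd z)) := by
    apply entW_relabel
    intro z z'
    simp only [Prod.ext_iff, tupRest, funext_iff]
    constructor
    · rintro ⟨⟨h1, h2⟩, h3⟩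
      refine ⟨fun l => ?_, h2⟩
      by_cases hl : l = k
      · subst hl; exact h3
      · exact h1 ⟨l, hl⟩
    · rintro ⟨h1, h2⟩
      exact ⟨⟨fun j => h1 j.1, h2⟩, h1 k⟩
  have e3 : entW (wE q) (fun z : (∀ i, α i) × γ' =>
      (Prod.snd z, (fun p : (∀ i, α i) × γ' => p.1 k) z))
      = entW (wE q) (fun z : (∀ i, α i) × γ' => ((fun p : (∀ i, α i) × γ' => p.1 k) z, Prod.snd z)) :=
    entW_swap _ _
  unfold cmiW miW
  rw [e1, e2, e3]
  ring

lemma mi_part_le (hq : ∑ z, q z = 1) (k : Fin K) :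
    miOf (massOf q) (fun p : (∀ i, α i) × γ' => p.1 k) Prod.snd
      ≤ miOf (massOf q) Prod.fst Prod.snd := by
  rw [miOf_massOf hq, miOf_massOf hq]
  have key := cmiW_nonneg (wE_nonneg q) (Prod.fst : (∀ i, α i) × γ' → ∀ i, α i)
    (Prod.snd : (∀ i, α i) × γ' → γ') (fun p : (∀ i, α i) × γ' => p.1 k)
  have f1 : entW (wE q) (fun z : (∀ i, α i) × γ' =>
      (Prod.fst z, (fun p : (∀ i, α i) × γ' => p.1 k) z))
      = entW (wE q) (Prod.fst : (∀ i, α i) × γ' → ∀ i, α i) := by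
    apply entW_relabel
    intro z z'
    simp only [Prod.ext_iff]
    exact ⟨fun h => h.1, fun h => ⟨h, by rw [h]⟩⟩
  have f2 : entW (wE q) (fun z : (∀ i, α i) × γ' =>
      ((Prod.fst z, Prod.snd z), (fun p : (∀ i, α i) × γ' => p.1 k) z))
      = entW (wE q) (fun z : (∀ i, α i) × γ' => (Prod.fst z, Prod.snd z)) := by
    apply entW_relabel
    intro z z'
    simp only [Prod.ext_iff]
    exact ⟨fun h => h.1, fun h => ⟨h, by rw [h.1]⟩⟩
  have f3 : entW (wE q) (fun z : (∀ i, α i) × γ' =>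
      (Prod.snd z, (fun p : (∀ i, α i) × γ' => p.1 k) z))
      = entW (wE q) (fun z : (∀ i, α i) × γ' =>
        ((fun p : (∀ i, α i) × γ' => p.1 k) z, Prod.snd z)) :=
    entW_swap _ _
  unfold cmiW at key
  rw [f1, f2, f3] at key
  unfold miW
  linarith

lemma mi_cond_zero (hK : 2 ≤ K) (hq : ∑ z, q z = 1)
    (hci : condIndepFam (massOf q) (fun i (p : (∀ i, α i) × γ') => p.1 i) Prod.snd)
    {k j : Fin K} (hkj : k ≠ j) :
    cmiW (wE q) (fun p : (∀ i, α i) × γ' => p.1 k)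
      (fun p : (∀ i, α i) × γ' => p.1 j) Prod.snd = 0 := by
  apply cmiW_eq_zero (wE_nonneg q)
  intro b c d
  have hCI := CI_enn hK q hq hci hkj b c d
  have t1 : (massOf q {z : (∀ i, α i) × γ' | z.1 k = b ∧ z.2 = d}).toReal
      = fm (wE q) (fun t : (∀ i, α i) × γ' => t.1 k = b ∧ t.2 = d) :=
    toReal_massOf hq _
  have t2 : (massOf q {z : (∀ i, α i) × γ' | z.1 j = c ∧ z.2 = d}).toReal
      = fm (wE q) (fun t : (∀ i, α i) × γ' => t.1 j = c ∧ t.2 = d) :=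
    toReal_massOf hq _
  have t3 : (massOf q {z : (∀ i, α i) × γ' | (z.1 k = b ∧ z.1 j = c) ∧ z.2 = d}).toReal
      = fm (wE q) (fun t : (∀ i, α i) × γ' => t.1 k = b ∧ t.1 j = c ∧ t.2 = d) := by
    rw [toReal_massOf hq]
    exact fm_congr fun t => by
      simp only [Set.mem_setOf_eq]
      tauto
  have t4 : (massOf q {z : (∀ i, α i) × γ' | z.2 = d}).toReal
      = fm (wE q) (fun t : (∀ i, α i) × γ' => t.2 = d) :=
    toReal_massOf hq _
  have := congrArg ENNReal.toReal hCI
  rw [ENNReal.toReal_mul, ENNReal.toReal_mul, t1, t2, t3, t4] at this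
  exact this

lemma mi_ge_pairMI (hK : 2 ≤ K) (hq : ∑ z, q z = 1)
    (hci : condIndepFam (massOf q) (fun i (p : (∀ i, α i) × γ') => p.1 i) Prod.snd)
    {k j : Fin K} (hkj : k ≠ j) :
    miOf (massOf q) (fun p : (∀ i, α i) × γ' => p.1 k) (fun p : (∀ i, α i) × γ' => p.1 j)
      ≤ miOf (massOf q) (fun p : (∀ i, α i) × γ' => p.1 k) Prod.snd := by
  rw [miOf_massOf hq, miOf_massOf hq]
  set w := wE q with hw
  set Ek := fun p : (∀ i, α i) × γ' => p.1 k with hEk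
  set Ej := fun p : (∀ i, α i) × γ' => p.1 j with hEj
  have chainA : miW w Ek (fun t => (Prod.snd t, Ej t))
      = miW w Ek Prod.snd + cmiW w Ek Ej Prod.snd := miW_chain Ek Ej Prod.snd
  have chainB : miW w Ek (fun t => (Ej t, Prod.snd t))
      = miW w Ek Ej + cmiW w Ek Prod.snd Ej := miW_chain Ek Prod.snd Ej
  have hzero : cmiW w Ek Ej Prod.snd = 0 := mi_cond_zero q hK hq hci hkj
  have hswap : miW w Ek (fun t => (Prod.snd t, Ej t))
      = miW w Ek (fun t => (Ej t, Prod.snd t)) := by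
    unfold miW
    have g1 : entW w (fun t : (∀ i, α i) × γ' => (Prod.snd t, Ej t))
        = entW w (fun t : (∀ i, α i) × γ' => (Ej t, Prod.snd t)) := entW_swap _ _
    have g2 : entW w (fun t : (∀ i, α i) × γ' => (Ek t, (Prod.snd t, Ej t)))
        = entW w (fun t : (∀ i, α i) × γ' => (Ek t, (Ej t, Prod.snd t))) := by
      apply entW_relabel
      intro z z'
      simp only [Prod.ext_iff]
      tauto
    rw [g1, g2]
  have hnn : 0 ≤ cmiW w Ek Prod.snd Ej := cmiW_nonneg (hw ▸ wE_nonneg q) _ _ _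
  linarith [chainA, chainB, hswap, hzero, hnn]

end Main


section Main2
variable {K : ℕ} {α : Fin K → Type} [∀ k, Fintype (α k)] {γ' : Type} [Fintype γ']
  (q : (∀ i, α i) × γ' → ℝ≥0∞)

lemma cmi_pair_zero (hq : ∑ z, q z = 1) {j : Fin K}
    (hmc : cmiOf (massOf q) (tupRest (fun i (p : (∀ i, α i) × γ') => p.1 i) j)
      Prod.snd (fun p => p.1 j) = 0)
    {i : Fin K} (hij : i ≠ j) :
    cmiW (wE q) (fun p : (∀ i, α i) × γ' => p.1 i) Prod.snd
      (fun p : (∀ i, α i) × γ' => p.1 j) = 0 := by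
  have h0 : cmiW (wE q) (tupRest (fun i (p : (∀ i, α i) × γ') => p.1 i) j)
      Prod.snd (fun p : (∀ i, α i) × γ' => p.1 j) = 0 := by
    rw [← cmiOf_massOf hq]
    exact hmc
  have hdet : ∀ t t' : (∀ i, α i) × γ',
      tupRest (fun i (p : (∀ i, α i) × γ') => p.1 i) j t
        = tupRest (fun i (p : (∀ i, α i) × γ') => p.1 i) j t'
      → t.1 i = t'.1 i := by
    intro t t' h
    exact congrFun h ⟨i, hij⟩
  have hchain := cmiW_chain2 (w := wE q)
    (f := tupRest (fun i (p : (∀ i, α i) × γ') => p.1 i) j)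
    (f' := fun p : (∀ i, α i) × γ' => p.1 i) Prod.snd
    (fun p : (∀ i, α i) × γ' => p.1 j) hdet
  have n1 : 0 ≤ cmiW (wE q) (fun p : (∀ i, α i) × γ' => p.1 i) Prod.snd
      (fun p : (∀ i, α i) × γ' => p.1 j) := cmiW_nonneg (wE_nonneg q) _ _ _
  have n2 : 0 ≤ cmiW (wE q) (tupRest (fun i (p : (∀ i, α i) × γ') => p.1 i) j)
      Prod.snd (fun t : (∀ i, α i) × γ' => (t.1 i, t.1 j)) := by
    exact cmiW_nonneg (wE_nonneg q) _ _ _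
  rw [h0] at hchain
  linarith [hchain, n1, n2]

lemma mi_le_pairMI (hq : ∑ z, q z = 1) {i j : Fin K} (hij : i ≠ j)
    (hmc : cmiOf (massOf q) (tupRest (fun i (p : (∀ i, α i) × γ') => p.1 i) j)
      Prod.snd (fun p => p.1 j) = 0) :
    miOf (massOf q) (fun p : (∀ i, α i) × γ' => p.1 i) Prod.snd
      ≤ miOf (massOf q) (fun p : (∀ i, α i) × γ' => p.1 i)
          (fun p : (∀ i, α i) × γ' => p.1 j) := by
  rw [miOf_massOf hq, miOf_massOf hq]
  set w := wE q with hw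
  set Ei := fun p : (∀ i, α i) × γ' => p.1 i with hEi
  set Ej := fun p : (∀ i, α i) × γ' => p.1 j with hEj
  have chainA : miW w Ei (fun t => (Prod.snd t, Ej t))
      = miW w Ei Prod.snd + cmiW w Ei Ej Prod.snd := miW_chain Ei Ej Prod.snd
  have chainB : miW w Ei (fun t => (Ej t, Prod.snd t))
      = miW w Ei Ej + cmiW w Ei Prod.snd Ej := miW_chain Ei Prod.snd Ej
  have hzero : cmiW w Ei Prod.snd Ej = 0 := cmi_pair_zero q hq hmc hij
  have hswap : miW w Ei (fun t => (Prod.snd t, Ej t))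
      = miW w Ei (fun t => (Ej t, Prod.snd t)) := by
    unfold miW
    have g1 : entW w (fun t : (∀ i, α i) × γ' => (Prod.snd t, Ej t))
        = entW w (fun t : (∀ i, α i) × γ' => (Ej t, Prod.snd t)) := entW_swap _ _
    have g2 : entW w (fun t : (∀ i, α i) × γ' => (Ei t, (Prod.snd t, Ej t)))
        = entW w (fun t : (∀ i, α i) × γ' => (Ei t, (Ej t, Prod.snd t))) := by
      apply entW_relabel
      intro z z'
      simp only [Prod.ext_iff]
      tauto
    rw [g1, g2]
  have hnn : 0 ≤ cmiW w Ei Ej Prod.snd := cmiW_nonneg (hw ▸ wE_nonneg q) _ _ _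
  linarith [chainA, chainB, hswap, hzero, hnn]

end Main2

-- ===== end auxiliary =====

/-- Proposition 4: if all pairwise mutual informations equal `m` and
the infimum defining `B(X_1, …, X_K)` is attained at the value `m` (by some
finite-valued `W*` jointly distributed with `X̄`, given `X_1, …, X_K` are
conditionally independent given `W*` and `I(X̄ ; W*) = m`), then
`C(X_1, …, X_K) = min_{i ≠ j} I(X_i ; X_j) = m`. -/
theorem stmt9 {Ω : Type*} [MeasurableSpace Ω] (μ : Measure Ω) [IsProbabilityMeasure μ]
    {K : ℕ} (hK : 2 ≤ K) {α : Fin K → Type} [∀ k, Fintype (α k)]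
    (X : ∀ k, Ω → α k) (m : ℝ)
    (hpair : ∀ i j : Fin K, i ≠ j → miOf (fun s => μ s) (X i) (X j) = m)
    (hW : ∃ (γ : Type) (_ : Fintype γ) (q : (∀ i, α i) × γ → ℝ≥0∞),
      (∑ z : (∀ i, α i) × γ, q z) = 1 ∧
      (∀ x : ∀ i, α i, massOf q (Prod.fst ⁻¹' {x}) = μ (tupF X ⁻¹' {x})) ∧
      condIndepFam (massOf q) (fun i (p : (∀ i, α i) × γ) => p.1 i) Prod.snd ∧
      miOf (massOf q) Prod.fst Prod.snd = m) :
    CInfo (fun s => μ s) X = m := by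
  classical
  obtain ⟨γ0, hγ0, q0, hq0, hmarg0, hci0, hmi0⟩ := hW
  have hK0 : (0 : ℕ) < K := by omega
  have hK1 : (1 : ℕ) < K := by omega
  set i0 : Fin K := ⟨0, hK0⟩ with hi0def
  set i1 : Fin K := ⟨1, hK1⟩ with hi1def
  have hi01 : i0 ≠ i1 := by
    simp [hi0def, hi1def, Fin.ext_iff]
  unfold CInfo
  -- upper bound
  have hub : ∀ r ∈ { r : ℝ | ∃ (γ : Type) (_ : Fintype γ)
      (q : (∀ i, α i) × γ → ℝ≥0∞),
      (∑ z : (∀ i, α i) × γ, q z) = 1 ∧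
      (∀ x : ∀ i, α i, massOf q (Prod.fst ⁻¹' {x}) = (fun s => μ s) (tupF X ⁻¹' {x})) ∧
      (∀ k : Fin K, cmiOf (massOf q)
          (tupRest (fun i (p : (∀ i, α i) × γ) => p.1 i) k)
          Prod.snd (fun p => p.1 k) = 0) ∧
      r = miOf (massOf q) Prod.fst Prod.snd }, r ≤ m := by
    rintro r ⟨γ1, hγ1, q1, hq1, hmarg1, hmc1, rfl⟩
    have step1 : miOf (massOf q1) Prod.fst Prod.snd
        = miOf (massOf q1) (fun p : (∀ i, α i) × γ1 => p.1 i0) Prod.snd := by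
      have hd := markov_diff q1 hq1 i0
      rw [hmc1 i0] at hd
      linarith [hd]
    have step2 : miOf (massOf q1) (fun p : (∀ i, α i) × γ1 => p.1 i0) Prod.snd
        ≤ miOf (massOf q1) (fun p : (∀ i, α i) × γ1 => p.1 i0)
            (fun p : (∀ i, α i) × γ1 => p.1 i1) :=
      mi_le_pairMI q1 hq1 hi01 (hmc1 i1)
    have step3 : miOf (massOf q1) (fun p : (∀ i, α i) × γ1 => p.1 i0)
        (fun p : (∀ i, α i) × γ1 => p.1 i1) = m :=
      (transfer_mi μ X q1 hq1 hmarg1 i0 i1).symm.trans (hpair i0 i1 hi01)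
    linarith [step1, step2, step3]
  -- membership
  have hmem : m ∈ { r : ℝ | ∃ (γ : Type) (_ : Fintype γ)
      (q : (∀ i, α i) × γ → ℝ≥0∞),
      (∑ z : (∀ i, α i) × γ, q z) = 1 ∧
      (∀ x : ∀ i, α i, massOf q (Prod.fst ⁻¹' {x}) = (fun s => μ s) (tupF X ⁻¹' {x})) ∧
      (∀ k : Fin K, cmiOf (massOf q)
          (tupRest (fun i (p : (∀ i, α i) × γ) => p.1 i) k)
          Prod.snd (fun p => p.1 k) = 0) ∧
      r = miOf (massOf q) Prod.fst Prod.snd } := by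
    refine ⟨γ0, hγ0, q0, hq0, hmarg0, ?_, hmi0.symm⟩
    intro k
    rw [markov_diff q0 hq0 k]
    set j : Fin K := if k = i0 then i1 else i0 with hjdef
    have hkj : k ≠ j := by
      rw [hjdef]
      by_cases hk : k = i0
      · rw [if_pos hk, hk]; exact hi01
      · rw [if_neg hk]; exact hk
    have le1 : miOf (massOf q0) (fun p : (∀ i, α i) × γ0 => p.1 k) Prod.snd
        ≤ miOf (massOf q0) Prod.fst Prod.snd := mi_part_le q0 hq0 k
    have pairm : miOf (massOf q0) (fun p : (∀ i, α i) × γ0 => p.1 k)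
        (fun p : (∀ i, α i) × γ0 => p.1 j) = m :=
      (transfer_mi μ X q0 hq0 hmarg0 k j).symm.trans (hpair k j hkj)
    have ge1 : miOf (massOf q0) (fun p : (∀ i, α i) × γ0 => p.1 k)
        (fun p : (∀ i, α i) × γ0 => p.1 j)
        ≤ miOf (massOf q0) (fun p : (∀ i, α i) × γ0 => p.1 k) Prod.snd :=
      mi_ge_pairMI q0 hK hq0 hci0 hkj
    rw [hmi0]
    linarith [le1, pairm, ge1]
  apply le_antisymm
  · exact csSup_le (Set.nonempty_of_mem hmem) hub
  · exact le_csSup ⟨m, fun x hx => hub x hx⟩ hmem
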